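/- arXiv:2501.07428 — 3 statements merged into one kernel-verified Lean document; each statement's English description precedes it below -/
import Mathlib

section
/- Let Σ be a finite alphabet and let w : ℤ → Σ be a bi-infinite word. Define the infinite words w₊ : ℕ → Σ and w₋ : ℕ → Σ by w₊(n) = w(n) and w₋(n) = w(−n). Then the set of finite infixes of w is well-quasi-ordered by the infix relation if and only if both w₊ and w₋ are ultimately uniformly recurrent. -/
/-- A finite word `u` is an infix of the infinite word `w : ℕ → A`. -/
def IsInfInfix {A : Type*} (w : ℕ → A) (u : List A) : Prop :=
  ∃ i : ℕ, u = (List.range u.length).map fun j => w (i + j)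

/-- A finite word `u` is an infix of the bi-infinite word `w : ℤ → A`. -/
def IsBiInfix {A : Type*} (w : ℤ → A) (u : List A) : Prop :=
  ∃ i : ℤ, u = (List.range u.length).map fun j => w (i + (j : ℤ))

/-- An infinite word is uniformly recurrent if every finite infix `u` of it occurs
in every sufficiently long infix. -/
def UniformlyRecurrent {A : Type*} (w : ℕ → A) : Prop :=
  ∀ u : List A, IsInfInfix w u →
    ∃ k : ℕ, 1 ≤ k ∧ ∀ v : List A, IsInfInfix w v → k ≤ v.length → u <:+: v

/-- An infinite word is ultimately uniformly recurrent if some suffix of it is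
uniformly recurrent. -/
def UltimatelyUniformlyRecurrent {A : Type*} (w : ℕ → A) : Prop :=
  ∃ N₀ : ℕ, UniformlyRecurrent fun n => w (N₀ + n)

/-- A subset `L` of words is well-quasi-ordered by the relation `r`. -/
def IsWqoOn {A : Type*} (L : Set (List A)) (r : List A → List A → Prop) : Prop :=
  ∀ f : ℕ → List A, (∀ n, f n ∈ L) → ∃ i j, i < j ∧ r (f i) (f j)

namespace WqoAux

variable {A : Type*}

/-- Segment of a one-sided infinite word. -/
def segN (x : ℕ → A) (i L : ℕ) : List A := (List.range L).map fun j => x (i + j)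

/-- Segment of a bi-infinite word. -/
def segZ (w : ℤ → A) (i : ℤ) (L : ℕ) : List A :=
  (List.range L).map fun j : ℕ => w (i + (j : ℤ))

@[simp] lemma length_segN (x : ℕ → A) (i L : ℕ) : (segN x i L).length = L := by simp [segN]
@[simp] lemma length_segZ (w : ℤ → A) (i : ℤ) (L : ℕ) : (segZ w i L).length = L := by
  rw [segZ, List.length_map, List.length_range]

lemma getElem_segN (x : ℕ → A) (i L j : ℕ) (h : j < (segN x i L).length) :
    (segN x i L)[j] = x (i + j) := by
  simp only [segN, List.getElem_map, List.getElem_range]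

lemma getElem_segZ (w : ℤ → A) (i : ℤ) (L j : ℕ) (h : j < (segZ w i L).length) :
    (segZ w i L)[j] = w (i + (j : ℤ)) := by
  simp only [segZ, List.getElem_map, List.getElem_range]

lemma segN_append (x : ℕ → A) (i m n : ℕ) :
    segN x i (m + n) = segN x i m ++ segN x (i + m) n := by
  apply List.ext_getElem (by simp)
  intro j h1 h2
  rcases lt_or_ge j m with hj | hj
  · rw [List.getElem_append_left (by simpa using hj), getElem_segN, getElem_segN]
  · rw [List.getElem_append_right (by simpa using hj), getElem_segN, getElem_segN]
    simp only [length_segN]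
    congr 1
    omega

lemma segZ_append (w : ℤ → A) (i : ℤ) (m n : ℕ) :
    segZ w i (m + n) = segZ w i m ++ segZ w (i + (m : ℤ)) n := by
  apply List.ext_getElem (by simp)
  intro j h1 h2
  rcases lt_or_ge j m with hj | hj
  · rw [List.getElem_append_left (by simpa using hj), getElem_segZ, getElem_segZ]
  · rw [List.getElem_append_right (by simpa using hj), getElem_segZ, getElem_segZ]
    simp only [length_segZ]
    congr 1
    omega

lemma segN_decomp (x : ℕ → A) (i' a L c : ℕ) :
    segN x i' (a + (L + c)) = segN x i' a ++ (segN x (i' + a) L ++ segN x (i' + a + L) c) := by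
  rw [segN_append, segN_append]

lemma segN_infix (x : ℕ → A) {i L i' L' : ℕ} (h1 : i' ≤ i) (h2 : i + L ≤ i' + L') :
    segN x i L <:+: segN x i' L' := by
  refine ⟨segN x i' (i - i'), segN x (i + L) (i' + L' - (i + L)), ?_⟩
  have this1 := segN_decomp x i' (i - i') L (i' + L' - (i + L))
  have h3 : i' + (i - i') = i := by omega
  rw [h3] at this1
  have h4 : (i - i') + (L + (i' + L' - (i + L))) = L' := by omega
  rw [h4] at this1
  rw [List.append_assoc]
  exact this1.symm

lemma segZ_decomp (w : ℤ → A) (i' : ℤ) (a L c : ℕ) :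
    segZ w i' (a + (L + c)) =
      segZ w i' a ++ (segZ w (i' + (a : ℤ)) L ++ segZ w (i' + (a : ℤ) + (L : ℤ)) c) := by
  rw [segZ_append, segZ_append]

lemma segZ_infix (w : ℤ → A) {i i' : ℤ} {L L' : ℕ} (h1 : i' ≤ i) (h2 : i + L ≤ i' + L') :
    segZ w i L <:+: segZ w i' L' := by
  refine ⟨segZ w i' (i - i').toNat, segZ w (i + (L : ℤ)) (i' + L' - (i + L)).toNat, ?_⟩
  have this1 := segZ_decomp w i' (i - i').toNat L (i' + L' - (i + L)).toNat
  have h3 : i' + (((i - i').toNat : ℕ) : ℤ) = i := by omega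
  rw [h3] at this1
  have h4 : (i - i').toNat + (L + (i' + L' - (i + L)).toNat) = L' := by omega
  rw [h4] at this1
  rw [List.append_assoc]
  exact this1.symm


lemma isInfInfix_iff {x : ℕ → A} {u : List A} :
    IsInfInfix x u ↔ ∃ i, u = segN x i u.length := Iff.rfl

lemma isBiInfix_iff {w : ℤ → A} {u : List A} :
    IsBiInfix w u ↔ ∃ i, u = segZ w i u.length := by
  simp [IsBiInfix, segZ, ← List.map_eq_flatMap, List.map_map, Function.comp_def]

lemma isInfInfix_of_seg {x : ℕ → A} {m L : ℕ} {u : List A} (h : u = segN x m L) :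
    IsInfInfix x u := isInfInfix_iff.mpr ⟨m, by rw [h, length_segN]⟩

lemma isBiInfix_of_seg {w : ℤ → A} {m : ℤ} {L : ℕ} {u : List A} (h : u = segZ w m L) :
    IsBiInfix w u := isBiInfix_iff.mpr ⟨m, by rw [h, length_segZ]⟩

/-- `u` occurs in `x` at position `i`. -/
def OccAt (x : ℕ → A) (u : List A) (i : ℕ) : Prop := u = segN x i u.length

lemma isInfInfix_iff_occAt {x : ℕ → A} {u : List A} :
    IsInfInfix x u ↔ ∃ i, OccAt x u i := isInfInfix_iff

lemma occAt_of_eq_seg {x : ℕ → A} {u : List A} {i L : ℕ} (h : u = segN x i L) :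
    OccAt x u i := by rw [OccAt, h, length_segN]

lemma occAt_append {x : ℕ → A} {v₁ v₂ : List A} {r : ℕ} (h : OccAt x (v₁ ++ v₂) r) :
    OccAt x v₁ r ∧ OccAt x v₂ (r + v₁.length) := by
  unfold OccAt at h
  rw [List.length_append, segN_append] at h
  obtain ⟨h1, h2⟩ := List.append_inj h (by rw [length_segN])
  exact ⟨occAt_of_eq_seg h1, occAt_of_eq_seg h2⟩

lemma occAt_of_infix {x : ℕ → A} {u v : List A} {r : ℕ} (hv : OccAt x v r) (huv : u <:+: v) :
    ∃ s, s + u.length ≤ v.length ∧ OccAt x u (r + s) := by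
  obtain ⟨s, t, hst⟩ := huv
  have hlen : s.length + u.length ≤ v.length := by
    have := congrArg List.length hst
    simp at this
    omega
  rw [← hst, List.append_assoc] at hv
  exact ⟨s.length, hlen, (occAt_append (occAt_append hv).2).1⟩

/-- Infixes of a uniformly recurrent word are partially well ordered by the infix order. -/
lemma pwo_of_uniformlyRecurrent [Finite A] {x : ℕ → A} (hx : UniformlyRecurrent x) :
    Set.PartiallyWellOrderedOn {u : List A | IsInfInfix x u} (· <:+: ·) := by
  rw [Set.partiallyWellOrderedOn_iff_exists_lt]
  intro f hf
  obtain ⟨k, -, hk⟩ := hx (f 0) (hf 0)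
  by_cases h : ∃ j, 1 ≤ j ∧ k ≤ (f j).length
  · obtain ⟨j, hj1, hjk⟩ := h
    exact ⟨0, j, hj1, hk _ (hf j) hjk⟩
  · push_neg at h
    obtain ⟨m, n, hmn, he⟩ := Set.Finite.exists_lt_map_eq_of_forall_mem
      (f := fun j => f (j + 1))
      (fun j => h (j + 1) (Nat.le_add_left 1 j)) (List.finite_length_lt A k)
    exact ⟨m + 1, n + 1, by omega, by rw [he]⟩


lemma exists_gt_occ {x : ℕ → A} {u : List A} (hu : {i | OccAt x u i}.Infinite) (a : ℕ) :
    ∃ i, a < i ∧ OccAt x u i := by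
  by_contra hc
  push_neg at hc
  exact hu ((Set.finite_Iic a).subset fun i hi => not_lt.1 fun hlt => hc i hlt hi)

/-- If the infixes of `x` are pwo, then every recurrent factor of `x` is syndetic. -/
lemma syndetic_of_pwo {x : ℕ → A}
    (h : Set.PartiallyWellOrderedOn {u : List A | IsInfInfix x u} (· <:+: ·))
    {u : List A} (hu : {i | OccAt x u i}.Infinite) :
    ∃ G, ∀ a, ∃ i, a ≤ i ∧ i ≤ a + G ∧ OccAt x u i := by
  classical
  by_contra hsyn
  push_neg at hsyn
  obtain ⟨p₀, hp₀⟩ := hu.nonempty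
  -- arbitrarily large gaps between consecutive occurrences
  have key : ∀ G, ∃ p q, OccAt x u p ∧ OccAt x u q ∧ p < q ∧ G < q - p ∧
      ∀ r, p < r → r < q → ¬ OccAt x u r := by
    intro G
    obtain ⟨a', ha'⟩ := hsyn (G + p₀ + 1)
    set a := max a' (p₀ + 1) with hadef
    have haup : a ≤ a' + (p₀ + 1) := max_le (by omega) (by omega)
    have ha1 : a' ≤ a := le_max_left _ _
    have ha2 : p₀ + 1 ≤ a := le_max_right _ _
    have hfree : ∀ i, a ≤ i → i ≤ a + G → ¬ OccAt x u i := fun i h1 h2 =>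
      ha' i (by omega) (by omega)
    have hex : ∃ i, a ≤ i ∧ OccAt x u i := by
      obtain ⟨i, h1, h2⟩ := exists_gt_occ hu a
      exact ⟨i, le_of_lt h1, h2⟩
    obtain ⟨hq1, hq2⟩ := Nat.find_spec hex
    have hqG : a + G < Nat.find hex := by
      by_contra hc
      exact hfree _ hq1 (by omega) hq2
    have hp : OccAt x u (Nat.findGreatest (fun r => OccAt x u r) (a - 1)) :=
      Nat.findGreatest_spec (m := p₀) (by omega) hp₀
    have hpa : Nat.findGreatest (fun r => OccAt x u r) (a - 1) ≤ a - 1 :=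
      Nat.findGreatest_le _
    refine ⟨_, _, hp, hq2, by omega, by omega, ?_⟩
    intro r h1 h2 hr
    rcases lt_or_ge r a with hra | hra
    · exact Nat.findGreatest_is_greatest h1 (by omega) hr
    · exact Nat.find_min hex h2 ⟨hra, hr⟩
  choose P Q hP hQ hPQ hgap hcons using key
  set G : ℕ → ℕ := fun n => Nat.rec 0 (fun _ prev => Q prev - P prev) n with hGdef
  have hGsucc : ∀ n, G (n + 1) = Q (G n) - P (G n) := fun n => rfl
  have hGmono : StrictMono G := strictMono_nat_of_lt_succ fun n => by
    have h1 := hgap (G n)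
    rw [hGsucc]
    omega
  obtain ⟨i, j, hij, hinf⟩ := Set.partiallyWellOrderedOn_iff_exists_lt.mp h (fun n => segN x (P (G n)) (G (n + 1) + u.length))
    (fun n => isInfInfix_of_seg rfl)
  obtain ⟨s, hs1, hs2⟩ := occAt_of_infix (occAt_of_eq_seg rfl) hinf
  rw [length_segN, length_segN] at hs1
  -- decompose the `i`-th window: `u` occurs at both ends
  have hqi : Q (G i) = P (G i) + G (i + 1) := by
    have h1 := hPQ (G i); rw [hGsucc]; omega
  have hsplit1 : segN x (P (G i)) (G (i + 1) + u.length) =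
      u ++ segN x (P (G i) + u.length) (G (i + 1)) := by
    have h1 : segN x (P (G i)) (u.length + G (i + 1)) =
        segN x (P (G i)) u.length ++ segN x (P (G i) + u.length) (G (i + 1)) :=
      segN_append x _ _ _
    rw [← hP (G i)] at h1
    rw [add_comm] at h1
    exact h1
  have hsplit2 : segN x (P (G i)) (G (i + 1) + u.length) =
      segN x (P (G i)) (G (i + 1)) ++ u := by
    have h1 : segN x (P (G i)) (G (i + 1) + u.length) =
        segN x (P (G i)) (G (i + 1)) ++ segN x (P (G i) + G (i + 1)) u.length :=
      segN_append x _ _ _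
    rw [← hqi, ← hQ (G i)] at h1
    exact h1
  have hocc1 : OccAt x u (P (G j) + s) := by
    have h1 := hs2
    rw [hsplit1] at h1
    exact (occAt_append h1).1
  have hocc2 : OccAt x u (P (G j) + s + G (i + 1)) := by
    have h1 := hs2
    rw [hsplit2] at h1
    have h2 := (occAt_append h1).2
    rwa [length_segN] at h2
  -- both occurrences are trapped between the consecutive occurrences of the `j`-th window
  have hqj : Q (G j) = P (G j) + G (j + 1) := by
    have h1 := hPQ (G j); rw [hGsucc]; omega
  have hgi : 0 < G (i + 1) := by
    have := hGmono (show i < i + 1 by omega); omega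
  have hij1 : G (i + 1) < G (j + 1) := hGmono (show i + 1 < j + 1 by omega)
  have hm1 : P (G j) + s = P (G j) := by
    by_contra hc
    exact hcons (G j) _ (by omega) (by omega) hocc1
  have hm2 : P (G j) + s + G (i + 1) = Q (G j) := by
    by_contra hc
    exact hcons (G j) _ (by omega) (by omega) hocc2
  omega


lemma segN_shift (x : ℕ → A) (N₀ i L : ℕ) :
    segN (fun n => x (N₀ + n)) i L = segN x (N₀ + i) L := by
  simp [segN, Nat.add_assoc]

/-- If the infixes of `x` are pwo, then from some point on every factor is recurrent. -/
lemma eventually_recurrent_of_pwo {x : ℕ → A}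
    (h : Set.PartiallyWellOrderedOn {u : List A | IsInfInfix x u} (· <:+: ·)) :
    ∃ N₀, ∀ (u : List A) (i : ℕ), N₀ ≤ i → OccAt x u i → {j | OccAt x u j}.Infinite := by
  by_contra hc
  push_neg at hc
  have pick : ∀ N, ∃ (u : List A) (b : ℕ), (∃ i, N ≤ i ∧ OccAt x u i) ∧
      ∀ j, OccAt x u j → j ≤ b := by
    intro N
    obtain ⟨u, i, hNi, hOcc, hfin⟩ := hc N
    obtain ⟨b, hb⟩ := hfin.bddAbove
    exact ⟨u, b, ⟨i, hNi, hOcc⟩, fun j hj => hb hj⟩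
  choose U B hex hbnd using pick
  have hUB : ∀ N, N ≤ B N := fun N => by
    obtain ⟨i, h1, h2⟩ := hex N
    exact le_trans h1 (hbnd N i h2)
  set c : ℕ → ℕ := fun n => Nat.rec 0 (fun _ prev => B prev + 1) n with hcdef
  have hcsucc : ∀ n, c (n + 1) = B (c n) + 1 := fun n => rfl
  have hcmono : StrictMono c := strictMono_nat_of_lt_succ fun n => by
    have := hUB (c n); rw [hcsucc]; omega
  obtain ⟨i, j, hij, hinf⟩ := Set.partiallyWellOrderedOn_iff_exists_lt.mp h (fun n => U (c n)) (fun n =>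
    isInfInfix_iff_occAt.mpr ((hex (c n)).imp fun i hi => hi.2))
  obtain ⟨r, hr1, hr2⟩ := hex (c j)
  obtain ⟨s, -, hs⟩ := occAt_of_infix hr2 hinf
  have hb := hbnd (c i) _ hs
  have hcj : c (i + 1) ≤ c j := hcmono.monotone (show i + 1 ≤ j by omega)
  rw [hcsucc] at hcj
  omega

/-- If the infixes of `x` are pwo, then `x` is ultimately uniformly recurrent. -/
lemma uur_of_pwo [Finite A] {x : ℕ → A}
    (h : Set.PartiallyWellOrderedOn {u : List A | IsInfInfix x u} (· <:+: ·)) :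
    UltimatelyUniformlyRecurrent x := by
  obtain ⟨N₀, hN₀⟩ := eventually_recurrent_of_pwo h
  refine ⟨N₀, ?_⟩
  intro u hu
  obtain ⟨i, hi⟩ := isInfInfix_iff.mp hu
  have hux : OccAt x u (N₀ + i) := occAt_of_eq_seg (hi.trans (segN_shift x N₀ i u.length))
  have hrec := hN₀ u (N₀ + i) (Nat.le_add_right _ _) hux
  obtain ⟨G, hG⟩ := syndetic_of_pwo h hrec
  refine ⟨G + u.length + 1, by omega, ?_⟩
  intro v hv hvlen
  obtain ⟨b, hb⟩ := isInfInfix_iff.mp hv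
  have hvx : v = segN x (N₀ + b) v.length := hb.trans (segN_shift x N₀ b v.length)
  obtain ⟨m, hm1, hm2, hm3⟩ := hG (N₀ + b)
  have hm3' : u = segN x m u.length := hm3
  have hinf : segN x m u.length <:+: segN x (N₀ + b) v.length :=
    segN_infix x hm1 (by omega)
  rw [← hm3', ← hvx] at hinf
  exact hinf


lemma segN_right0 (w : ℤ → A) (m L : ℕ) :
    segN (fun n : ℕ => w ((n : ℤ))) m L = segZ w ((m : ℤ)) L := by
  simp only [segN, segZ]
  apply List.map_congr_left
  intro a _
  congr 1

lemma segN_right (w : ℤ → A) (Np m L : ℕ) :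
    segN (fun n : ℕ => w (((Np + n : ℕ)) : ℤ)) m L = segZ w ((Np : ℤ) + (m : ℤ)) L := by
  simp only [segN, segZ]
  apply List.map_congr_left
  intro a _
  congr 1
  all_goals (push_cast; try ring)

lemma reverse_segZ_left (w : ℤ → A) (Nm : ℕ) (i : ℤ) (L m : ℕ)
    (hm : (m : ℤ) = 1 - i - L - Nm) :
    (segZ w i L).reverse = segN (fun n : ℕ => w (-(((Nm + n : ℕ)) : ℤ))) m L := by
  apply List.ext_getElem (by simp)
  intro j h1 h2
  simp only [List.length_reverse, length_segZ] at h1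
  rw [List.getElem_reverse, getElem_segZ, getElem_segN]
  simp only [length_segZ]
  show w (i + ((L - 1 - j : ℕ) : ℤ)) = w (-(((Nm + (m + j) : ℕ)) : ℤ))
  congr 1
  omega

lemma reverse_segZ_left0 (w : ℤ → A) (i : ℤ) (L m : ℕ)
    (hm : (m : ℤ) = 1 - i - L) :
    (segZ w i L).reverse = segN (fun n : ℕ => w (-(n : ℤ))) m L := by
  apply List.ext_getElem (by simp)
  intro j h1 h2
  simp only [List.length_reverse, length_segZ] at h1
  rw [List.getElem_reverse, getElem_segZ, getElem_segN]
  simp only [length_segZ]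
  show w (i + ((L - 1 - j : ℕ) : ℤ)) = w (-(((m + j : ℕ)) : ℤ))
  congr 1
  omega

lemma pwo_biUnion {α ι : Type*} {r : α → α → Prop} (s : Finset ι) (C : ι → Set α)
    (h : ∀ i ∈ s, Set.PartiallyWellOrderedOn (C i) r) :
    Set.PartiallyWellOrderedOn (⋃ i ∈ s, C i) r := by
  classical
  revert h
  induction s using Finset.induction_on with
  | empty =>
    intro _
    rw [Set.partiallyWellOrderedOn_iff_exists_lt]
    intro f hf
    exact absurd (hf 0) (by simp)
  | @insert a s ha ih =>
    intro h
    rw [Finset.set_biUnion_insert]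
    exact (h a (Finset.mem_insert_self a s)).union
      (ih fun i hi => h i (Finset.mem_insert_of_mem hi))

/-- The infixes of a bi-infinite word whose two one-sided words are ultimately
uniformly recurrent are partially well ordered by the infix relation. -/
lemma pwo_of_uur [Finite A] {w : ℤ → A}
    (hR : UltimatelyUniformlyRecurrent fun n : ℕ => w (n : ℤ))
    (hL : UltimatelyUniformlyRecurrent fun n : ℕ => w (-(n : ℤ))) :
    Set.PartiallyWellOrderedOn {u : List A | IsBiInfix w u}
      ((· <:+: ·) : List A → List A → Prop) := by
  classical
  obtain ⟨Np, hp⟩ := hR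
  obtain ⟨Nm, hm⟩ := hL
  have hS0 : Set.PartiallyWellOrderedOn {([] : List A)}
      ((· <:+: ·) : List A → List A → Prop) := by
    rw [Set.partiallyWellOrderedOn_iff_exists_lt]
    intro f hf
    refine ⟨0, 1, one_pos, ?_⟩
    have h0 := hf 0; have h1 := hf 1
    simp only [Set.mem_singleton_iff] at h0 h1
    rw [h0, h1]
  have hSR := pwo_of_uniformlyRecurrent hp
  have hSL := (pwo_of_uniformlyRecurrent hm).image_of_monotone_on
      (f := List.reverse) (r' := ((· <:+: ·) : List A → List A → Prop))
      (fun a _ b _ hab => List.reverse_infix.mpr hab)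
  have hNat : Set.IsPWO (Set.univ : Set ℕ) :=
    (Set.isWF_univ_iff.mpr ⟨wellFounded_lt⟩).isPWO
  have hprod := hNat.prod hNat
  have hC : ∀ p : ℤ, Set.PartiallyWellOrderedOn
      ((fun ab : ℕ × ℕ => segZ w (p + 1 - (ab.1 : ℤ)) (ab.1 + ab.2)) ''
        ((Set.univ : Set ℕ) ×ˢ (Set.univ : Set ℕ)))
      ((· <:+: ·) : List A → List A → Prop) := by
    intro p
    apply Set.PartiallyWellOrderedOn.image_of_monotone_on hprod
    rintro ⟨a, b⟩ - ⟨a', b'⟩ - hab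
    obtain ⟨hab1, hab2⟩ : a ≤ a' ∧ b ≤ b' := hab
    apply segZ_infix
    · omega
    · push_cast
      omega
  set J : Finset ℤ := Finset.Icc (1 - (Nm : ℤ)) (max ((Np : ℤ) - 1) (1 - (Nm : ℤ))) with hJ
  have hCU := pwo_biUnion J
      (fun p => (fun ab : ℕ × ℕ => segZ w (p + 1 - (ab.1 : ℤ)) (ab.1 + ab.2)) ''
        ((Set.univ : Set ℕ) ×ˢ (Set.univ : Set ℕ)))
      (fun p _ => hC p)
  have hbig := ((hS0.union hSR).union hSL).union hCU
  refine hbig.mono ?_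
  intro u hu
  obtain ⟨i, hi⟩ := isBiInfix_iff.mp hu
  generalize hLdef : u.length = L at hi
  rcases Nat.eq_zero_or_pos L with h0 | hpos
  · refine Or.inl (Or.inl (Or.inl ?_))
    subst h0
    have : u = [] := by rw [hi]; simp [segZ]
    simp [this]
  by_cases hr : (Np : ℤ) ≤ i
  · -- the word lies in the right one-sided word
    refine Or.inl (Or.inl (Or.inr ?_))
    have he : segZ w i L = segN (fun n : ℕ => w (((Np + n : ℕ)) : ℤ)) (i - Np).toNat L := by
      rw [segN_right]
      congr 1
      omega
    exact isInfInfix_of_seg (hi.trans he)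
  by_cases hl : i + L ≤ 1 - (Nm : ℤ)
  · -- the word lies in the left one-sided word
    refine Or.inl (Or.inr ?_)
    refine ⟨u.reverse, ?_, List.reverse_reverse u⟩
    have he := reverse_segZ_left w Nm i L (1 - i - L - Nm).toNat (by omega)
    rw [← hi] at he
    exact isInfInfix_of_seg he
  · -- the word crosses a bounded central region
    refine Or.inr ?_
    set p : ℤ := max i (1 - (Nm : ℤ)) with hpdef
    have hp1 : i ≤ p := le_max_left _ _
    have hp2 : 1 - (Nm : ℤ) ≤ p := le_max_right _ _
    have hp3 : p ≤ i + L - 1 := max_le (by omega) (by omega)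
    have hpJ : p ∈ J := by
      rw [hJ, Finset.mem_Icc]
      exact ⟨hp2, max_le (le_trans (by omega) (le_max_left _ _)) (le_max_right _ _)⟩
    refine Set.mem_biUnion hpJ ?_
    refine ⟨((p + 1 - i).toNat, L - (p + 1 - i).toNat), by simp, ?_⟩
    have ha : ((p + 1 - i).toNat : ℤ) = p + 1 - i := by omega
    have hb : (p + 1 - i).toNat + (L - (p + 1 - i).toNat) = L := by omega
    have hc : p + 1 - (((p + 1 - i).toNat : ℕ) : ℤ) = i := by omega
    show segZ w (p + 1 - (((p + 1 - i).toNat : ℕ) : ℤ)) ((p + 1 - i).toNat + (L - (p + 1 - i).toNat)) = u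
    rw [hb, hc]
    exact hi.symm

end WqoAux

open WqoAux in
/-- The set of finite infixes of a bi-infinite word `w` is
well-quasi-ordered by the infix relation iff both one-sided words `w₊ : n ↦ w n`
and `w₋ : n ↦ w (−n)` are ultimately uniformly recurrent. -/
theorem biInfinite_infixes_wqo_iff
    {A : Type*} [Fintype A] (w : ℤ → A) :
    IsWqoOn {u | IsBiInfix w u} (· <:+: ·)
    ↔
    (UltimatelyUniformlyRecurrent fun n : ℕ => w (n : ℤ)) ∧
    (UltimatelyUniformlyRecurrent fun n : ℕ => w (-(n : ℤ))) := by
  constructor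
  · intro h
    have h' : Set.PartiallyWellOrderedOn {u : List A | IsBiInfix w u}
        ((· <:+: ·) : List A → List A → Prop) := Set.partiallyWellOrderedOn_iff_exists_lt.mpr h
    constructor
    · -- the right one-sided word
      apply uur_of_pwo
      apply h'.mono
      intro u hu
      obtain ⟨i, hi⟩ := isInfInfix_iff.mp (show IsInfInfix (fun n : ℕ => w (n : ℤ)) u from hu)
      exact isBiInfix_of_seg (hi.trans (segN_right0 w i u.length))
    · -- the left one-sided word
      apply uur_of_pwo
      have himg := h'.image_of_monotone_on
        (f := List.reverse) (r' := ((· <:+: ·) : List A → List A → Prop))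
        (fun a _ b _ hab => List.reverse_infix.mpr hab)
      apply himg.mono
      intro u hu
      obtain ⟨i, hi⟩ := isInfInfix_iff.mp (show IsInfInfix (fun n : ℕ => w (-(n : ℤ))) u from hu)
      refine ⟨u.reverse, ?_, List.reverse_reverse u⟩
      have he := reverse_segZ_left0 w (1 - (i : ℤ) - u.length) u.length i (by ring)
      rw [← hi] at he
      exact isBiInfix_of_seg (show u.reverse = _ from by rw [← he, List.reverse_reverse])
  · rintro ⟨hR, hL⟩
    exact Set.partiallyWellOrderedOn_iff_exists_lt.mp (pwo_of_uur hR hL)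
end

section
/- Let Σ be a finite alphabet and let L ⊆ Σ* be a regular language. If L is well-quasi-ordered by the infix relation, then L is a bounded language. -/
/-- The `p`-fold concatenation of the word `x`. -/
def wpow {A : Type*} (x : List A) (p : ℕ) : List A := (List.replicate p x).flatten

/-- A language is bounded if it is contained in `w₁* ⋯ w_n*` for some words `wᵢ`. -/
def IsBoundedLang {A : Type*} (L : Set (List A)) : Prop :=
  ∃ (n : ℕ) (w : Fin n → List A), ∀ u ∈ L, ∃ c : Fin n → ℕ,
    u = (List.ofFn fun i : Fin n => wpow (w i) (c i)).flatten

/-- A language is regular if it is accepted by a DFA with finitely many states. -/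
def IsRegularLang {A : Type*} (L : Set (List A)) : Prop :=
  ∃ (Q : Type) (_ : Fintype Q) (M : DFA A Q), ∀ u : List A, u ∈ M.accepts ↔ u ∈ L

set_option linter.unusedVariables false
set_option linter.unusedSectionVars false

namespace WqoB
variable {A : Type*}

theorem wpow_zero (x : List A) : wpow x 0 = [] := rfl

theorem wpow_succ (x : List A) (p : ℕ) : wpow x (p + 1) = x ++ wpow x p := by
  simp [wpow, List.replicate_succ]

theorem wpow_length (x : List A) (p : ℕ) : (wpow x p).length = p * x.length := by
  induction p with
  | zero => simp [wpow]
  | succ n ih => rw [wpow_succ, List.length_append, ih]; ring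

theorem wpow_one (x : List A) : wpow x 1 = x := by simp [wpow]

theorem wpow_getD (x : List A) (a0 : A) (p : ℕ) :
    ∀ i, i < p * x.length → (wpow x p).getD i a0 = x.getD (i % x.length) a0 := by
  induction p with
  | zero => intro i hi; simp at hi
  | succ n ih =>
    intro i hi
    have hδ : (n+1) * x.length = n * x.length + x.length := by ring
    have hx : 0 < x.length := by
      rcases Nat.eq_zero_or_pos x.length with h | h
      · rw [h, Nat.mul_zero] at hi; omega
      · exact h
    rw [wpow_succ]
    by_cases hcase : i < x.length
    · rw [List.getD_append _ _ _ _ hcase, Nat.mod_eq_of_lt hcase]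
    · push_neg at hcase
      rw [List.getD_append_right _ _ _ _ hcase, ih (i - x.length) (by omega)]
      congr 1
      conv_rhs => rw [← Nat.sub_add_cancel hcase]
      rw [Nat.add_mod_right]

def IsPeriod (P : ℕ → A) (d : ℕ) : Prop := ∀ n, P (n + d) = P n

theorem IsPeriod.mul {P : ℕ → A} {d : ℕ} (h : IsPeriod P d) (q : ℕ) :
    ∀ n, P (n + q * d) = P n := by
  induction q with
  | zero => simp
  | succ m ih =>
    intro n
    have e : n + (m+1)*d = (n + m*d) + d := by ring
    rw [e, h (n + m*d), ih n]

theorem IsPeriod.mod_eq {P : ℕ → A} {d : ℕ} (h : IsPeriod P d) (hd : 0 < d) (n : ℕ) :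
    P n = P (n % d) := by
  conv_lhs => rw [← Nat.mod_add_div n d]
  rw [show n % d + d * (n / d) = n % d + (n / d) * d by ring]
  exact h.mul (n / d) (n % d)

theorem isPeriod_gcd {P : ℕ → A} :
    ∀ d, IsPeriod P d → ∀ e, IsPeriod P e → IsPeriod P (Nat.gcd d e) := by
  intro d
  induction d using Nat.strong_induction_on with
  | _ d ih =>
    intro hd e he
    rcases Nat.eq_zero_or_pos d with h0 | hpos
    · subst h0; simpa using he
    · rw [Nat.gcd_rec]
      refine ih (e % d) (Nat.mod_lt _ hpos) ?_ d hd
      intro n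
      have h1 : n + e % d + (e / d) * d = n + e := by
        rw [Nat.add_assoc]
        congr 1
        rw [Nat.mul_comm]
        exact Nat.mod_add_div e d
      calc P (n + e % d) = P (n + e % d + (e / d) * d) := (hd.mul (e/d) _).symm
        _ = P (n + e) := by rw [h1]
        _ = P n := he n

/-- The key combinatorial lemma: if all words `x s^a t^b s^c y` belong to a language
that is WQO by the infix relation, and `s`, `t` have the same positive length,
then `s = t`. -/
theorem key_eq (L : Set (List A)) (hwqo : IsWqoOn L (· <:+: ·))
    (x y s t : List A) (hl : t.length = s.length) (hpos : 0 < s.length)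
    (hmem : ∀ a b c : ℕ, x ++ (wpow s a ++ (wpow t b ++ (wpow s c ++ y))) ∈ L) :
    s = t := by
  classical
  by_contra hst
  have hsne : s ≠ [] := by intro h; rw [h] at hpos; simp at hpos
  obtain ⟨a0⟩ : Nonempty A := ⟨s.head hsne⟩
  set Ps : ℕ → A := fun n => s.getD (n % s.length) a0 with hPs
  set Pt : ℕ → A := fun n => t.getD (n % s.length) a0 with hPt
  have hPsl : IsPeriod Ps s.length := fun n => by simp [hPs, Nat.add_mod_right]
  have hPtl : IsPeriod Pt s.length := fun n => by simp [hPt, Nat.add_mod_right]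
  have hex : ∃ d, 0 < d ∧ IsPeriod Pt d := ⟨s.length, hpos, hPtl⟩
  have hr' : 0 < Nat.find hex ∧ IsPeriod Pt (Nat.find hex) := Nat.find_spec hex
  set r' := Nat.find hex with hr'def
  have hdvd : ∀ d, IsPeriod Pt d → r' ∣ d := by
    intro d hdper
    have hg : IsPeriod Pt (Nat.gcd r' d) := isPeriod_gcd _ hr'.2 _ hdper
    have hgpos : 0 < Nat.gcd r' d := Nat.gcd_pos_of_pos_left _ hr'.1
    have hgle : Nat.gcd r' d ≤ r' := Nat.le_of_dvd hr'.1 (Nat.gcd_dvd_left _ _)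
    have hnlt : ¬ Nat.gcd r' d < r' := fun hlt => Nat.find_min hex hlt ⟨hgpos, hg⟩
    have hge : Nat.gcd r' d = r' := by omega
    exact hge ▸ Nat.gcd_dvd_right r' d
  set m := x.length + 2 with hm
  set f : ℕ → List A := fun n => x ++ (wpow s 1 ++ (wpow t (m + 2*n) ++ (wpow s 1 ++ y))) with hf
  obtain ⟨i, j, hij, hinf⟩ := hwqo f (fun n => by rw [hf]; exact hmem 1 (m + 2*n) 1)
  obtain ⟨w1, w2, heq⟩ := hinf
  -- region lemmas (generic n)
  have flen : ∀ n, (f n).length =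
      x.length + 2*s.length + (m + 2*n) * s.length + y.length := by
    intro n
    simp only [hf, List.length_append, wpow_length, hl]
    ring
  have hreg1 : ∀ n p, x.length ≤ p → p < x.length + s.length →
      (f n).getD p a0 = Ps (p - x.length) := by
    intro n p h1 h2
    simp only [hf]
    rw [List.getD_append_right x _ a0 p (by omega)]
    rw [List.getD_append _ _ _ _ (by rw [wpow_length, one_mul]; omega)]
    rw [wpow_one]
    simp only [hPs]
    rw [Nat.mod_eq_of_lt (by omega)]
  have hreg2 : ∀ n p, x.length + s.length ≤ p →
      p < x.length + s.length + (m + 2*n) * s.length →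
      (f n).getD p a0 = Pt (p - (x.length + s.length)) := by
    intro n p h1 h2
    set W := (m + 2*n) * s.length with hW
    simp only [hf]
    rw [List.getD_append_right x _ a0 p (by omega)]
    rw [List.getD_append_right (wpow s 1) _ a0 _ (by rw [wpow_length, one_mul]; omega)]
    rw [wpow_length, one_mul]
    rw [List.getD_append _ _ _ _ (by rw [wpow_length, hl, ← hW]; omega)]
    rw [wpow_getD t a0 _ _ (by rw [hl, ← hW]; omega)]
    simp only [hPt, hl]
    congr 2
    omega
  have hreg3 : ∀ n p, x.length + s.length + (m + 2*n) * s.length ≤ p →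
      p < x.length + 2*s.length + (m + 2*n) * s.length →
      (f n).getD p a0 = Ps (p - (x.length + s.length + (m + 2*n) * s.length)) := by
    intro n p h1 h2
    set W := (m + 2*n) * s.length with hW
    simp only [hf]
    rw [List.getD_append_right x _ a0 p (by omega)]
    rw [List.getD_append_right (wpow s 1) _ a0 _ (by rw [wpow_length, one_mul]; omega)]
    rw [wpow_length, one_mul]
    rw [List.getD_append_right _ _ a0 _ (by rw [wpow_length, hl, ← hW]; omega)]
    rw [wpow_length, hl, ← hW]
    rw [List.getD_append _ _ _ _ (by rw [wpow_length, one_mul]; omega)]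
    rw [wpow_one]
    simp only [hPs]
    rw [Nat.mod_eq_of_lt (by omega)]
    congr 1
    omega
  -- abbreviate the two products
  set La := (m + 2*i) * s.length with hLa
  set Lb := (m + 2*j) * s.length with hLb
  have hfi : (f i).length = x.length + 2*s.length + La + y.length := flen i
  have hfj : (f j).length = x.length + 2*s.length + Lb + y.length := flen j
  have hab' : La + 2*s.length ≤ Lb := by
    calc La + 2*s.length = (m + 2*i + 2) * s.length := by rw [hLa]; ring
      _ ≤ (m + 2*j) * s.length := Nat.mul_le_mul_right _ (by omega)
  have hXa' : x.length + 2*s.length ≤ La := by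
    have h2 : x.length ≤ x.length * s.length := Nat.le_mul_of_pos_right _ hpos
    calc x.length + 2*s.length ≤ x.length*s.length + 2*s.length := by omega
      _ = (x.length + 2)*s.length := by ring
      _ ≤ (m + 2*i) * s.length := Nat.mul_le_mul_right _ (by omega)
  have hkeq : w1.length + (x.length + 2*s.length + La + y.length) + w2.length
      = x.length + 2*s.length + Lb + y.length := by
    have hlen2 := congrArg List.length heq
    simp only [List.length_append] at hlen2
    rw [hfi, hfj] at hlen2
    omega
  have hreg2i : ∀ p, x.length + s.length ≤ p → p < x.length + s.length + La →
      (f i).getD p a0 = Pt (p - (x.length + s.length)) := fun p h1 h2 => hreg2 i p h1 h2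
  have hreg2j : ∀ p, x.length + s.length ≤ p → p < x.length + s.length + Lb →
      (f j).getD p a0 = Pt (p - (x.length + s.length)) := fun p h1 h2 => hreg2 j p h1 h2
  have hreg3i : ∀ p, x.length + s.length + La ≤ p → p < x.length + 2*s.length + La →
      (f i).getD p a0 = Ps (p - (x.length + s.length + La)) := fun p h1 h2 => hreg3 i p h1 h2
  -- pointwise occurrence
  have hpoint : ∀ p, p < (f i).length →
      (f j).getD (w1.length + p) a0 = (f i).getD p a0 := by
    intro p hp
    rw [← heq, List.append_assoc]
    rw [List.getD_append_right w1 _ a0 _ (by omega)]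
    rw [Nat.add_sub_cancel_left]
    exact List.getD_append _ _ _ _ hp
  -- Step 1 : r' divides the offset
  have hstep1 : IsPeriod Pt w1.length := by
    have hwin : ∀ q, s.length ≤ q → q < s.length + s.length → Pt (q + w1.length) = Pt q := by
      intro q hq1 hq2
      have h1 : (f i).getD (q + x.length + s.length) a0
          = Pt (q + x.length + s.length - (x.length + s.length)) :=
        hreg2i _ (by omega) (by omega)
      have h2 : (f j).getD (w1.length + (q + x.length + s.length)) a0
          = Pt (w1.length + (q + x.length + s.length) - (x.length + s.length)) :=
        hreg2j _ (by omega) (by omega)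
      have h3 := hpoint (q + x.length + s.length) (by rw [hfi]; omega)
      rw [show q + x.length + s.length - (x.length + s.length) = q by omega] at h1
      rw [show w1.length + (q + x.length + s.length) - (x.length + s.length)
          = q + w1.length by omega] at h2
      rw [← h1, ← h3, h2]
    intro n
    have hq := hwin (s.length + n % s.length) (by omega)
      (by have := Nat.mod_lt n hpos; omega)
    have e3 : (s.length + n % s.length + w1.length) % s.length
        = (n + w1.length) % s.length := by
      rw [Nat.add_assoc, Nat.add_mod_left]
      exact (Nat.mod_modEq n s.length).add_right w1.length
    have e4 : (s.length + n % s.length) % s.length = n % s.length := by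
      rw [Nat.add_mod_left]
      exact Nat.mod_eq_of_lt (Nat.mod_lt n hpos)
    calc Pt (n + w1.length) = Pt ((n + w1.length) % s.length) := hPtl.mod_eq hpos _
      _ = Pt ((s.length + n % s.length + w1.length) % s.length) := by rw [e3]
      _ = Pt (s.length + n % s.length + w1.length) := (hPtl.mod_eq hpos _).symm
      _ = Pt (s.length + n % s.length) := hq
      _ = Pt ((s.length + n % s.length) % s.length) := hPtl.mod_eq hpos _
      _ = Pt (n % s.length) := by rw [e4]
      _ = Pt n := (hPtl.mod_eq hpos _).symm
  have hr'k : r' ∣ w1.length := hdvd _ hstep1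
  have hr'ℓ : r' ∣ s.length := hdvd _ hPtl
  have hr'La : r' ∣ La := hLa ▸ Dvd.dvd.mul_left hr'ℓ (m + 2*i)
  -- final window ⇒ Ps = Pt on a full period
  have hfinal : ∀ q, q < s.length → Ps q = Pt q := by
    by_cases hkℓ : s.length ≤ w1.length
    · intro q hq
      have h1 : (f i).getD (q + x.length) a0 = Ps (q + x.length - x.length) :=
        hreg1 i _ (by omega) (by omega)
      have h2 : (f j).getD (w1.length + (q + x.length)) a0
          = Pt (w1.length + (q + x.length) - (x.length + s.length)) :=
        hreg2j _ (by omega) (by omega)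
      have h3 := hpoint (q + x.length) (by rw [hfi]; omega)
      rw [show q + x.length - x.length = q by omega] at h1
      rw [show w1.length + (q + x.length) - (x.length + s.length)
          = q + (w1.length - s.length) by omega] at h2
      have e5 : Pt (q + (w1.length - s.length)) = Pt q := by
        obtain ⟨c, hc⟩ : r' ∣ (w1.length - s.length) := Nat.dvd_sub hr'k hr'ℓ
        rw [hc, show r' * c = c * r' from Nat.mul_comm _ _]
        exact hr'.2.mul c q
      rw [← h1, ← h3, h2, e5]
    · push_neg at hkℓ
      intro q hq
      have h1 : (f i).getD (q + (x.length + s.length + La)) a0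
          = Ps (q + (x.length + s.length + La) - (x.length + s.length + La)) :=
        hreg3i _ (by omega) (by omega)
      have h2 : (f j).getD (w1.length + (q + (x.length + s.length + La))) a0
          = Pt (w1.length + (q + (x.length + s.length + La)) - (x.length + s.length)) :=
        hreg2j _ (by omega) (by omega)
      have h3 := hpoint (q + (x.length + s.length + La)) (by rw [hfi]; omega)
      rw [show q + (x.length + s.length + La) - (x.length + s.length + La) = q by omega] at h1
      rw [show w1.length + (q + (x.length + s.length + La)) - (x.length + s.length)
          = q + (w1.length + La) by omega] at h2
      have e5 : Pt (q + (w1.length + La)) = Pt q := by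
        obtain ⟨c, hc⟩ : r' ∣ (w1.length + La) := Nat.dvd_add hr'k hr'La
        rw [hc, show r' * c = c * r' from Nat.mul_comm _ _]
        exact hr'.2.mul c q
      rw [← h1, ← h3, h2, e5]
  -- conclude s = t
  apply hst
  apply List.ext_getElem (by omega)
  intro idx h1 h2
  have hidx : idx < s.length := h1
  have hfin := hfinal idx hidx
  simp only [hPs, hPt] at hfin
  rw [Nat.mod_eq_of_lt hidx] at hfin
  rw [List.getD_eq_getElem s a0 h1, List.getD_eq_getElem t a0 h2] at hfin
  exact hfin

/-! ### Automaton lemmas -/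

section Automaton
variable {Q : Type*} (M : DFA A Q)

theorem evalFrom_wpow {p : Q} {w : List A} (h : M.evalFrom p w = p) (n : ℕ) :
    M.evalFrom p (wpow w n) = p := by
  induction n with
  | zero => rfl
  | succ c ih => rw [wpow_succ, DFA.evalFrom_of_append, h, ih]

/-- A shortest nonempty loop at the state `p` (or `[]` if there is none). -/
noncomputable def rho (p : Q) : List A :=
  letI := fun pr : Prop => Classical.propDecidable pr
  if h : ∃ n, ∃ w : List A, w.length = n + 1 ∧ M.evalFrom p w = p
  then Classical.choose (Nat.find_spec h) else []

theorem rho_spec (p : Q) (h : ∃ w : List A, w ≠ [] ∧ M.evalFrom p w = p) :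
    (rho M p ≠ [] ∧ M.evalFrom p (rho M p) = p) ∧
    ∀ w : List A, w ≠ [] → M.evalFrom p w = p → (rho M p).length ≤ w.length := by
  classical
  obtain ⟨w, hw, hwp⟩ := h
  have hwlen : 0 < w.length := List.length_pos_iff.mpr hw
  have h' : ∃ n, ∃ w : List A, w.length = n + 1 ∧ M.evalFrom p w = p :=
    ⟨w.length - 1, w, by omega, hwp⟩
  rw [rho]
  rw [dif_pos h']
  obtain ⟨hlen, hloop⟩ := Classical.choose_spec (Nat.find_spec h')
  constructor
  · exact ⟨by intro hnil; rw [hnil] at hlen; simp at hlen, hloop⟩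
  · intro w' hw' hw'p
    have hw'len : 0 < w'.length := List.length_pos_iff.mpr hw'
    have := Nat.find_min' h' (m := w'.length - 1) ⟨w', by omega, hw'p⟩
    omega

/-- At a useful state, every loop is a power of `rho`. -/
theorem loop_pow {L : Set (List A)} (hM : ∀ u, u ∈ M.accepts ↔ u ∈ L)
    (hwqo : IsWqoOn L (· <:+: ·)) {p : Q} {x0 y0 : List A}
    (hx0 : M.evalFrom M.start x0 = p) (hy0 : M.evalFrom p y0 ∈ M.accept) :
    ∀ w : List A, M.evalFrom p w = p → ∃ c, w = wpow (rho M p) c := by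
  have heqloop : ∀ s t : List A, M.evalFrom p s = p → M.evalFrom p t = p →
      s.length = t.length → s = t := by
    intro s t hs ht hlen
    rcases Nat.eq_zero_or_pos s.length with h0 | hposs
    · have hs0 : s = [] := List.length_eq_zero_iff.mp h0
      have ht0 : t = [] := List.length_eq_zero_iff.mp (by omega)
      rw [hs0, ht0]
    · refine key_eq L hwqo x0 y0 s t hlen.symm hposs (fun a b c => ?_)
      apply (hM _).mp
      show M.evalFrom M.start (x0 ++ (wpow s a ++ (wpow t b ++ (wpow s c ++ y0)))) ∈ M.accept
      rw [DFA.evalFrom_of_append, hx0, DFA.evalFrom_of_append, evalFrom_wpow M hs,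
        DFA.evalFrom_of_append, evalFrom_wpow M ht,
        DFA.evalFrom_of_append, evalFrom_wpow M hs]
      exact hy0
  have main : ∀ N, ∀ w : List A, w.length ≤ N → M.evalFrom p w = p →
      ∃ c, w = wpow (rho M p) c := by
    intro N
    induction N with
    | zero =>
      intro w hw _
      have : w = [] := List.length_eq_zero_iff.mp (by omega)
      exact ⟨0, by rw [this, wpow_zero]⟩
    | succ N ih =>
      intro w hwN hwp
      rcases eq_or_ne w [] with rfl | hne
      · exact ⟨0, rfl⟩
      · have hex : ∃ w' : List A, w' ≠ [] ∧ M.evalFrom p w' = p := ⟨w, hne, hwp⟩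
        obtain ⟨⟨hρne, hρloop⟩, hρmin⟩ := rho_spec M p hex
        have hρpos : 0 < (rho M p).length := List.length_pos_iff.mpr hρne
        have hle : (rho M p).length ≤ w.length := hρmin w hne hwp
        have hcomm : rho M p ++ w = w ++ rho M p := by
          refine heqloop _ _ ?_ ?_ (by simp [Nat.add_comm])
          · rw [DFA.evalFrom_of_append, hρloop, hwp]
          · rw [DFA.evalFrom_of_append, hwp, hρloop]
        have htake : w.take (rho M p).length = rho M p := by
          have h1 : (rho M p ++ w).take (rho M p).length = rho M p := List.take_left
          rw [hcomm] at h1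
          rwa [List.take_append_of_le_length hle] at h1
        have hw' : w = rho M p ++ w.drop (rho M p).length := by
          conv_lhs => rw [← List.take_append_drop (rho M p).length w, htake]
        have hloop' : M.evalFrom p (w.drop (rho M p).length) = p := by
          have h2 : M.evalFrom p (rho M p ++ w.drop (rho M p).length) = p := by
            rw [← hw']; exact hwp
          rwa [DFA.evalFrom_of_append, hρloop] at h2
        have hlen' : (w.drop (rho M p).length).length ≤ N := by
          rw [List.length_drop]; omega
        obtain ⟨c, hc⟩ := ih _ hlen' hloop'
        exact ⟨c + 1, by rw [wpow_succ, ← hc, ← hw']⟩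
  intro w hwp
  exact main w.length w le_rfl hwp

end Automaton

/-! ### Decomposition machinery -/

/-- `u` is covered by `W` with some exponents. -/
def PDec (W : List (List A)) (u : List A) : Prop :=
  ∃ cL : List ℕ, cL.length = W.length ∧
    u = ((W.zip cL).map fun pr => wpow pr.1 pr.2).flatten

theorem PDec_intro (W : List (List A)) (u : List A) (cL : List ℕ)
    (h1 : cL.length = W.length)
    (h2 : u = ((W.zip cL).map fun pr => wpow pr.1 pr.2).flatten) : PDec W u :=
  ⟨cL, h1, h2⟩

theorem PDec_nil (W : List (List A)) : PDec W ([] : List A) := by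
  refine ⟨List.replicate W.length 0, by simp, ?_⟩
  induction W with
  | nil => simp
  | cons w W ih =>
    simp only [List.length_cons, List.replicate_succ, List.zip_cons_cons, List.map_cons,
      List.flatten_cons]
    rw [← ih]
    simp [wpow_zero]

theorem PDec_append {W₁ W₂ : List (List A)} {u₁ u₂ : List A}
    (h1 : PDec W₁ u₁) (h2 : PDec W₂ u₂) : PDec (W₁ ++ W₂) (u₁ ++ u₂) := by
  obtain ⟨c1, hc1, e1⟩ := h1
  obtain ⟨c2, hc2, e2⟩ := h2
  refine ⟨c1 ++ c2, by simp [hc1, hc2], ?_⟩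
  rw [List.zip_append hc1.symm, List.map_append, List.flatten_append, ← e1, ← e2]

theorem flatten_zero_exps {Q' : Type*} (g : Q' → List A) (c : Q' → ℕ) :
    ∀ (l : List Q'), (∀ q ∈ l, c q = 0) →
      (l.map fun q => wpow (g q) (c q)).flatten = [] := by
  intro l
  induction l with
  | nil => simp
  | cons q l ih =>
    intro h
    simp only [List.map_cons, List.flatten_cons]
    rw [h q (by simp), wpow_zero, ih (fun q' hq' => h q' (by simp [hq']))]
    simp

theorem flatten_single {Q' : Type*} (g : Q' → List A) (c : Q' → ℕ) (p : Q') :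
    ∀ (l : List Q'), l.Nodup → p ∈ l → (∀ q, q ≠ p → c q = 0) →
      (l.map fun q => wpow (g q) (c q)).flatten = wpow (g p) (c p) := by
  intro l
  induction l with
  | nil => intro _ h; simp at h
  | cons q l ih =>
    intro hnd hmem hz
    simp only [List.map_cons, List.flatten_cons]
    rcases eq_or_ne q p with rfl | hqp
    · have hnotin : q ∉ l := (List.nodup_cons.mp hnd).1
      rw [flatten_zero_exps g c l (fun q' hq' => hz q' (fun he => hnotin (he ▸ hq')))]
      simp
    · have hmem' : p ∈ l := by
        rcases List.mem_cons.mp hmem with h | h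
        · exact absurd h.symm hqp
        · exact h
      rw [hz q hqp, wpow_zero, ih (List.nodup_cons.mp hnd).2 hmem' hz]
      simp

theorem zip_conv : ∀ (W : List (List A)) (cL : List ℕ), cL.length = W.length →
    ((W.zip cL).map fun pr => wpow pr.1 pr.2).flatten =
      (List.ofFn fun i : Fin W.length => wpow (W.get i) (cL.getD i 0)).flatten := by
  intro W
  induction W with
  | nil => intro cL h; simp
  | cons w W ih =>
    intro cL h
    cases cL with
    | nil => simp at h
    | cons c cL' =>
      simp only [List.zip_cons_cons, List.map_cons, List.flatten_cons, List.ofFn_succ]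
      rw [ih cL' (by simpa using h)]
      simp

section Slots
variable [Fintype A] {Q : Type*} [Fintype Q] (M : DFA A Q)

/-- The word family of a single slot. -/
noncomputable def slotW : List (List A) :=
  ((Finset.univ : Finset Q).toList.map (rho M)) ++
    ((Finset.univ : Finset A).toList.map (fun a => [a]))

theorem PDec_states (p : Q) (k : ℕ) :
    PDec ((Finset.univ : Finset Q).toList.map (rho M)) (wpow (rho M p) k) := by
  classical
  set l := (Finset.univ : Finset Q).toList with hl
  set c : Q → ℕ := fun q => if q = p then k else 0 with hc
  refine PDec_intro _ _ (l.map c) (by simp) ?_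
  rw [List.zip_map']
  rw [List.map_map]
  have : ((fun pr : List A × ℕ => wpow pr.1 pr.2) ∘ fun q => (rho M q, c q))
      = fun q => wpow (rho M q) (c q) := rfl
  rw [this]
  rw [flatten_single (rho M) c p l (Finset.nodup_toList _)
    (by rw [hl]; simp) (fun q hq => by rw [hc]; simp [hq])]
  rw [hc]; simp

theorem PDec_letter (a : A) :
    PDec (((Finset.univ : Finset A).toList.map (fun a => [a]))) [a] := by
  classical
  set l := (Finset.univ : Finset A).toList with hl
  set c : A → ℕ := fun b => if b = a then 1 else 0 with hc
  refine PDec_intro _ _ (l.map c) (by simp) ?_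
  rw [List.zip_map', List.map_map]
  have : ((fun pr : List A × ℕ => wpow pr.1 pr.2) ∘ fun b => (([b] : List A), c b))
      = fun b => wpow [b] (c b) := rfl
  rw [this]
  rw [flatten_single (fun b => ([b] : List A)) c a l (Finset.nodup_toList _)
    (by rw [hl]; simp) (fun q hq => by rw [hc]; simp [hq])]
  rw [hc]; simp [wpow_one]

theorem PDec_slot₁ (p : Q) (k : ℕ) (a : A) :
    PDec (slotW M) (wpow (rho M p) k ++ [a]) :=
  PDec_append (PDec_states M p k) (PDec_letter a)

theorem PDec_slot₀ (p : Q) (k : ℕ) : PDec (slotW M) (wpow (rho M p) k) := by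
  have := PDec_append (PDec_states M p k)
    (PDec_nil (((Finset.univ : Finset A).toList.map (fun a => [a]))))
  simpa [slotW] using this

theorem decomp [DecidableEq Q] {L : Set (List A)} (hM : ∀ u, u ∈ M.accepts ↔ u ∈ L)
    (hwqo : IsWqoOn L (· <:+: ·)) :
    ∀ (k : ℕ) (p : Q) (u : List A),
      (∃ x0, M.evalFrom M.start x0 = p) → M.evalFrom p u ∈ M.accept →
      ((Finset.range (u.length + 1)).image (fun i => M.evalFrom p (u.take i))).card ≤ k →
      PDec (List.flatten (List.replicate k (slotW M))) u := by
  classical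
  intro k
  induction k with
  | zero =>
    intro p u _ _ hcard
    exfalso
    have hp : p ∈ (Finset.range (u.length + 1)).image (fun i => M.evalFrom p (u.take i)) :=
      Finset.mem_image.mpr ⟨0, by simp, by simp⟩
    have := Finset.card_pos.mpr ⟨p, hp⟩
    omega
  | succ k ih =>
    intro p u hreach hacc hcard
    obtain ⟨x0, hx0⟩ := hreach
    set Pred : ℕ → Prop := fun i => M.evalFrom p (u.take i) = p with hPred
    set T := Nat.findGreatest Pred u.length with hT
    have hPredT : Pred T := by
      apply Nat.findGreatest_spec (m := 0) (Nat.zero_le _)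
      simp [hPred]
    have hTle : T ≤ u.length := Nat.findGreatest_le _
    have hloopT : M.evalFrom p (u.take T) = p := hPredT
    obtain ⟨c1, hc1⟩ := loop_pow M hM hwqo hx0 hacc (u.take T) hloopT
    by_cases hTfull : T = u.length
    · have hu : u.take T = u := by rw [hTfull, List.take_length]
      rw [List.replicate_succ, List.flatten_cons]
      have hP : PDec (slotW M) u := by rw [← hu, hc1]; exact PDec_slot₀ M p c1
      have := PDec_append hP (PDec_nil (List.flatten (List.replicate k (slotW M))))
      simpa using this
    · have hTlt : T < u.length := by omega
      set a := u.get ⟨T, hTlt⟩ with ha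
      have hsplit : u = u.take T ++ a :: u.drop (T + 1) := by
        conv_lhs => rw [← List.take_append_drop T u]
        congr 1
        rw [ha]
        exact List.drop_eq_getElem_cons hTlt
      set rest := u.drop (T+1) with hrest
      set p' := M.step p a with hp'
      have hconslem : ∀ (z : List A), M.evalFrom p (a :: z) = M.evalFrom p' z := by
        intro z; rfl
      have htakelen : (u.take T).length = T := by
        rw [List.length_take]; omega
      have heval_rest : M.evalFrom p' rest = M.evalFrom p u := by
        conv_rhs => rw [hsplit]
        rw [DFA.evalFrom_of_append, hloopT, hconslem]
      have hacc' : M.evalFrom p' rest ∈ M.accept := by rw [heval_rest]; exact hacc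
      have hreach' : ∃ x0', M.evalFrom M.start x0' = p' :=
        ⟨x0 ++ (u.take T ++ [a]), by
          rw [DFA.evalFrom_of_append, hx0, DFA.evalFrom_of_append, hloopT,
            DFA.evalFrom_singleton]⟩
      have keyi : ∀ i, i ≤ rest.length →
          M.evalFrom p' (rest.take i) = M.evalFrom p (u.take (T + 1 + i)) := by
        intro i hi
        have htk : u.take (T + 1 + i) = u.take T ++ a :: rest.take i := by
          conv_lhs => rw [hsplit]
          rw [show T + 1 + i = (u.take T).length + (1 + i) by omega]
          rw [List.take_append]
          congr 1
          · exact List.take_of_length_le (by omega)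
          · rw [show (u.take T).length + (1 + i) - (u.take T).length = i + 1 by omega]
            rfl
        rw [htk, DFA.evalFrom_of_append, hloopT, hconslem]
      have hrestlen : rest.length = u.length - (T + 1) := by
        rw [hrest, List.length_drop]
      have hsub : (Finset.range (rest.length + 1)).image
            (fun i => M.evalFrom p' (rest.take i)) ⊆
          ((Finset.range (u.length + 1)).image (fun i => M.evalFrom p (u.take i))).erase p := by
        intro q hq
        obtain ⟨i, hi, hqi⟩ := Finset.mem_image.mp hq
        have hi' : i ≤ rest.length := by
          have := Finset.mem_range.mp hi; omega
        have hbound : T + 1 + i < u.length + 1 := by omega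
        refine Finset.mem_erase.mpr ⟨?_, Finset.mem_image.mpr
          ⟨T + 1 + i, Finset.mem_range.mpr hbound, by rw [← keyi i hi', hqi]⟩⟩
        intro hqp
        have hPredbig : Pred (T + 1 + i) := by
          rw [hPred]
          show M.evalFrom p (u.take (T + 1 + i)) = p
          rw [← keyi i hi', hqi, hqp]
        have h1 : Nat.findGreatest Pred u.length < T + 1 + i := by omega
        have h2 : T + 1 + i ≤ u.length := by omega
        exact Nat.findGreatest_is_greatest h1 h2 hPredbig
      have hpmem : p ∈ (Finset.range (u.length + 1)).image
          (fun i => M.evalFrom p (u.take i)) := Finset.mem_image.mpr ⟨0, by simp, by simp⟩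
      have hcard' : ((Finset.range (rest.length + 1)).image
          (fun i => M.evalFrom p' (rest.take i))).card ≤ k := by
        have h1 := Finset.card_le_card hsub
        rw [Finset.card_erase_of_mem hpmem] at h1
        have h2 := Finset.card_pos.mpr ⟨p, hpmem⟩
        omega
      have ihres := ih p' rest hreach' hacc' hcard'
      rw [List.replicate_succ, List.flatten_cons]
      have hslot : PDec (slotW M) (wpow (rho M p) c1 ++ [a]) := PDec_slot₁ M p c1 a
      have hcomb := PDec_append hslot ihres
      have hux : u = (wpow (rho M p) c1 ++ [a]) ++ rest := by
        rw [← hc1]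
        conv_lhs => rw [hsplit]
        simp
      rwa [← hux] at hcomb

end Slots
end WqoB

/-- A regular language well-quasi-ordered by the infix relation
is bounded. -/
theorem regular_wqo_infix_bounded
    {A : Type*} [Fintype A] (L : Set (List A))
    (hreg : IsRegularLang L) (hwqo : IsWqoOn L (· <:+: ·)) :
    IsBoundedLang L := by
  classical
  obtain ⟨Q, fQ, M, hM⟩ := hreg
  letI := fQ
  refine ⟨(List.flatten (List.replicate (Fintype.card Q) (WqoB.slotW M))).length,
    fun i => (List.flatten (List.replicate (Fintype.card Q) (WqoB.slotW M))).get i, ?_⟩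
  intro u hu
  have hacc : M.evalFrom M.start u ∈ M.accept := (hM u).mpr hu
  have hcard : ((Finset.range (u.length + 1)).image
      (fun i => M.evalFrom M.start (u.take i))).card ≤ Fintype.card Q :=
    Finset.card_le_univ _
  have hdec := WqoB.decomp M hM hwqo (Fintype.card Q) M.start u ⟨[], rfl⟩ hacc hcard
  obtain ⟨cL, hclen, hceq⟩ := hdec
  refine ⟨fun i => cL.getD i 0, ?_⟩
  rw [hceq]
  exact WqoB.zip_conv _ cL hclen
end

section
/- There exists a language L over the two-letter alphabet {a, b} such that L is a chain for the infix relation (any two words of L are comparable by the infix relation), but the infix-downward closure of L is not well-quasi-ordered by the infix relation. -/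
/-- A chain for the relation `r`: any two elements are comparable. -/
def IsChainFor {A : Type*} (C : Set (List A)) (r : List A → List A → Prop) : Prop :=
  ∀ u ∈ C, ∀ v ∈ C, r u v ∨ r v u

/-- The chain of words `w n = a b a b² a b³ ⋯ a bⁿ a` (with `a = true`, `b = false`). -/
def wWord : ℕ → List Bool
  | 0 => [true]
  | n + 1 => wWord n ++ List.replicate (n + 1) false ++ [true]

/-- The antichain elements `a bⁿ⁺¹ a`. -/
def fWord (n : ℕ) : List Bool := true :: (List.replicate (n + 1) false ++ [true])

lemma wWord_prefix_succ (n : ℕ) : wWord n <+: wWord (n + 1) := by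
  simp [wWord]

lemma wWord_prefix {n m : ℕ} (h : n ≤ m) : wWord n <+: wWord m := by
  induction m with
  | zero => simp_all
  | succ m ih =>
    rcases Nat.lt_or_ge n (m + 1) with h' | h'
    · exact (ih (Nat.lt_succ_iff.mp h')).trans (wWord_prefix_succ m)
    · have : n = m + 1 := le_antisymm h h'
      simp [this]

lemma wWord_ends (n : ℕ) : ∃ p, wWord n = p ++ [true] := by
  cases n with
  | zero => exact ⟨[], rfl⟩
  | succ n => exact ⟨wWord n ++ List.replicate (n + 1) false, by simp [wWord]⟩

lemma fWord_infix (n : ℕ) : fWord n <:+: wWord (n + 1) := by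
  obtain ⟨p, hp⟩ := wWord_ends n
  refine ⟨p, [], ?_⟩
  simp [wWord, hp, fWord]

lemma count_true_fWord (n : ℕ) : (fWord n).count true = 2 := by
  simp [fWord, List.count_cons, List.count_append, List.count_replicate]

lemma fWord_not_infix {i j : ℕ} (h : i < j) : ¬ (fWord i <:+: fWord j) := by
  rintro ⟨s, t, hst⟩
  have hcount := congrArg (List.count true) hst
  simp only [List.count_append, count_true_fWord] at hcount
  have hs0 : s.count true = 0 := by omega
  have ht0 : t.count true = 0 := by omega
  have hlen := congrArg List.length hst
  simp only [List.length_append, fWord, List.length_cons, List.length_append,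
    List.length_replicate, List.length_singleton] at hlen
  rcases s with _ | ⟨x, s⟩
  · -- s = [], so t ≠ [] and t is all false
    have ht : t ≠ [] := by rintro rfl; simp at hlen; omega
    have hlast := congrArg List.getLast? hst
    rw [List.nil_append, List.getLast?_append_of_ne_nil _ ht] at hlast
    have htlast : t.getLast ht = true := by
      have : t.getLast? = some true := by
        rw [hlast]; simp only [fWord, ← List.cons_append, List.getLast?_concat]
      rwa [List.getLast?_eq_getLast ht, Option.some_inj] at this
    have := List.count_pos_iff.mpr (List.getLast_mem ht)
    rw [htlast, ht0] at this
    omega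
  · -- s = x :: s, head must be true but count says x appears, so x = false... contradiction
    have hx : x = true := by
      have := congrArg List.head? hst
      simpa [fWord] using this
    simp [hx, List.count_cons] at hs0

/-- Over a two-letter alphabet there is a chain for the infix
relation whose infix-downward closure is not well-quasi-ordered by the infix
relation. -/
theorem exists_infix_chain_with_non_wqo_downward_closure :
    ∃ L : Set (List Bool),
      IsChainFor L (· <:+: ·) ∧
      ¬ IsWqoOn {u | ∃ v ∈ L, u <:+: v} (· <:+: ·) := by
  refine ⟨Set.range wWord, ?_, ?_⟩
  · rintro u ⟨n, rfl⟩ v ⟨m, rfl⟩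
    rcases le_total n m with h | h
    · exact Or.inl (wWord_prefix h).isInfix
    · exact Or.inr (wWord_prefix h).isInfix
  · intro hwqo
    obtain ⟨i, j, hij, hinf⟩ := hwqo fWord fun n =>
      ⟨wWord (n + 1), ⟨n + 1, rfl⟩, fWord_infix n⟩
    exact fWord_not_infix hij hinf
end
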